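/- Let W be a subspace of V × V that is totally B-isotropic and has dim_K W = N. Then dim_K (W ∩ (V × 0)) = dim_K (W ∩ (0 × V)). -/

import Mathlib

set_option maxHeartbeats 800000

open Module

lemma aux_isotropic_le
    (K : Type*) [Field K] (V : Type*) [AddCommGroup V] [Module K V]
    [FiniteDimensional K V] (N : ℕ) (hV : finrank K V = N)
    (b : V →ₗ[K] V →ₗ[K] K)
    (hb_nondeg : ∀ v : V, (∀ w : V, b v w = 0) → v = 0)
    (hb_refl : ∀ v w : V, b v w = 0 ↔ b w v = 0)
    (W : Submodule K (V × V))
    (hW_iso : ∀ w ∈ W, ∀ w' ∈ W, b w.1 w'.1 - b w.2 w'.2 = 0)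
    (hW_dim : finrank K W = N) :
    finrank K ↥(W ⊓ Submodule.fst K V V) ≤ finrank K ↥(W ⊓ Submodule.snd K V V) := by
  classical
  have hrefl : b.IsRefl := fun v w h => (hb_refl v w).mp h
  have hnd : LinearMap.BilinForm.Nondegenerate b :=
    ⟨fun v h => hb_nondeg v h, fun v h => hb_nondeg v (fun w => (hb_refl w v).mp (h w))⟩
  set P1 : Submodule K V := W.map (LinearMap.fst K V V) with hP1def
  -- rank-nullity: finrank P1 + finrank (W ⊓ snd) = N
  have h1 : finrank K P1 + finrank K ↥(W ⊓ Submodule.snd K V V) = N := by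
    have f := (LinearMap.fst K V V).comp W.subtype
    have hrange : LinearMap.range ((LinearMap.fst K V V).comp W.subtype) = P1 := by
      rw [LinearMap.range_comp, Submodule.range_subtype]
    have hker : LinearMap.ker ((LinearMap.fst K V V).comp W.subtype)
        = (W ⊓ Submodule.snd K V V).comap W.subtype := by
      ext x
      simp [LinearMap.mem_ker, Submodule.mem_comap, Submodule.snd, Submodule.mem_bot, x.2]
    have := LinearMap.finrank_range_add_finrank_ker ((LinearMap.fst K V V).comp W.subtype)
    rw [hrange, hker, hW_dim] at this
    rw [← this]
    congr 1
    exact (Submodule.comapSubtypeEquivOfLe (inf_le_left :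
      W ⊓ Submodule.snd K V V ≤ W)).finrank_eq.symm
  -- the embedding of W ⊓ fst into orthogonal of P1
  have h2 : finrank K ↥(W ⊓ Submodule.fst K V V)
      ≤ finrank K ↥(LinearMap.BilinForm.orthogonal b P1) := by
    set g := (LinearMap.fst K V V).comp (W ⊓ Submodule.fst K V V).subtype with hg
    have hinj : Function.Injective g := by
      rintro ⟨⟨x1, x2⟩, hx⟩ ⟨⟨y1, y2⟩, hy⟩ h
      have hx2 : x2 = 0 := by simpa [Submodule.fst] using hx.2
      have hy2 : y2 = 0 := by simpa [Submodule.fst] using hy.2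
      simp only [hg, LinearMap.comp_apply, Submodule.coe_subtype, LinearMap.fst_apply] at h
      exact Subtype.ext (Prod.ext h (hx2.trans hy2.symm))
    have hle : LinearMap.range g ≤ LinearMap.BilinForm.orthogonal b P1 := by
      rintro _ ⟨⟨⟨x1, x2⟩, hx⟩, rfl⟩
      intro n hn
      obtain ⟨⟨w1, w2⟩, hw, rfl⟩ := hn
      have hx2 : x2 = 0 := by simpa [Submodule.fst] using hx.2
      have h0 := hW_iso (x1, x2) hx.1 (w1, w2) hw
      simp only [hx2, map_zero, LinearMap.zero_apply, sub_zero] at h0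
      have : b x1 w1 = 0 := by simpa [hx2] using h0
      exact hrefl _ _ this
    calc finrank K ↥(W ⊓ Submodule.fst K V V) = finrank K ↥(LinearMap.range g) :=
          (LinearMap.finrank_range_of_inj hinj).symm
      _ ≤ _ := Submodule.finrank_mono hle
  have h3 : finrank K ↥(LinearMap.BilinForm.orthogonal b P1)
      = finrank K V - finrank K P1 :=
    LinearMap.BilinForm.finrank_orthogonal (B := b) hnd P1
  have h4 : finrank K ↥(W ⊓ Submodule.snd K V V) ≤ N := by
    have := Submodule.finrank_le (W ⊓ Submodule.snd K V V)
    omega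
  omega

/-- Let `K` be a field, `V` a finite-dimensional `K`-vector space with
`dim_K V = N`, and `b` a nondegenerate reflexive bilinear form on `V`.  Let `B` be the
bilinear form on `V × V` given by `B((v₁,v₂),(w₁,w₂)) = b v₁ w₁ - b v₂ w₂`.
If `W` is a totally `B`-isotropic subspace of `V × V` with `dim_K W = N`, then
`dim_K (W ∩ (V × 0)) = dim_K (W ∩ (0 × V))`. -/
theorem isotropic_dim_inter_fst_eq_dim_inter_snd
    (K : Type*) [Field K] (V : Type*) [AddCommGroup V] [Module K V]
    [FiniteDimensional K V] (N : ℕ) (hV : finrank K V = N)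
    (b : V →ₗ[K] V →ₗ[K] K)
    (hb_nondeg : ∀ v : V, (∀ w : V, b v w = 0) → v = 0)
    (hb_refl : ∀ v w : V, b v w = 0 ↔ b w v = 0)
    (W : Submodule K (V × V))
    (hW_iso : ∀ w ∈ W, ∀ w' ∈ W, b w.1 w'.1 - b w.2 w'.2 = 0)
    (hW_dim : finrank K W = N) :
    finrank K ↥(W ⊓ Submodule.fst K V V) = finrank K ↥(W ⊓ Submodule.snd K V V) := by
  have h1 := aux_isotropic_le K V N hV b hb_nondeg hb_refl W hW_iso hW_dim
  -- apply the aux lemma to the swapped subspace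
  set e := LinearEquiv.prodComm K V V with he
  set W' := W.map (e : V × V →ₗ[K] V × V) with hW'
  have hW'_iso : ∀ w ∈ W', ∀ w' ∈ W', b w.1 w'.1 - b w.2 w'.2 = 0 := by
    rintro _ ⟨x, hx, rfl⟩ _ ⟨y, hy, rfl⟩
    have := hW_iso x hx y hy
    simp only [he, LinearEquiv.coe_coe, LinearEquiv.prodComm_apply, Prod.fst_swap,
      Prod.snd_swap]
    linear_combination -this
  have hW'_dim : finrank K W' = N := by
    rw [← hW_dim, hW']
    exact (Submodule.equivMapOfInjective _ e.injective W).symm.finrank_eq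
  have h2 := aux_isotropic_le K V N hV b hb_nondeg hb_refl W' hW'_iso hW'_dim
  have efst : (W' ⊓ Submodule.fst K V V) = (W ⊓ Submodule.snd K V V).map (e : V × V →ₗ[K] V × V) := by
    ext ⟨x1, x2⟩
    simp only [Submodule.mem_inf, Submodule.mem_map, hW', he, LinearEquiv.coe_coe,
      LinearEquiv.prodComm_apply, Submodule.fst, Submodule.snd, Submodule.mem_comap,
      Submodule.mem_bot, LinearMap.fst_apply, LinearMap.snd_apply, Prod.swap_prod_mk,
      Prod.exists, Prod.mk.injEq]
    constructor
    · rintro ⟨⟨a, c, hac, rfl, rfl⟩, h2⟩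
      exact ⟨a, c, ⟨hac, h2⟩, rfl, rfl⟩
    · rintro ⟨a, c, ⟨hac, h0⟩, rfl, rfl⟩
      exact ⟨⟨a, c, hac, rfl, rfl⟩, h0⟩
  have esnd : (W' ⊓ Submodule.snd K V V) = (W ⊓ Submodule.fst K V V).map (e : V × V →ₗ[K] V × V) := by
    ext ⟨x1, x2⟩
    simp only [Submodule.mem_inf, Submodule.mem_map, hW', he, LinearEquiv.coe_coe,
      LinearEquiv.prodComm_apply, Submodule.fst, Submodule.snd, Submodule.mem_comap,
      Submodule.mem_bot, LinearMap.fst_apply, LinearMap.snd_apply, Prod.swap_prod_mk,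
      Prod.exists, Prod.mk.injEq]
    constructor
    · rintro ⟨⟨a, c, hac, rfl, rfl⟩, h2⟩
      exact ⟨a, c, ⟨hac, h2⟩, rfl, rfl⟩
    · rintro ⟨a, c, ⟨hac, h0⟩, rfl, rfl⟩
      exact ⟨⟨a, c, hac, rfl, rfl⟩, h0⟩
  have e1 : finrank K ↥(W' ⊓ Submodule.fst K V V) = finrank K ↥(W ⊓ Submodule.snd K V V) := by
    rw [efst]
    exact ((Submodule.equivMapOfInjective _ e.injective _).symm).finrank_eq
  have e2 : finrank K ↥(W' ⊓ Submodule.snd K V V) = finrank K ↥(W ⊓ Submodule.fst K V V) := by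
    rw [esnd]
    exact ((Submodule.equivMapOfInjective _ e.injective _).symm).finrank_eq
  omega
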